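/- arXiv:2212.11373 — 5 statements merged into one kernel-verified Lean document; each statement's English description precedes it below -/
import Mathlib

section
/- Let E be the elliptic curve y² = x³ + x² + 16x + 180 over ℚ. The points (−2,12), (4,−18) and (22,−108) lie on E; one has [2](−2,12) = (4,−18) = [2](22,−108) and [2](4,−18) = (−5,0); the point (−2,12) has order 8 in E(ℚ); and the subgroup of E(ℚ) generated by {(−2,12), (4,−18), (22,−108)} is cyclic of order 8. -/
open WeierstrassCurve WeierstrassCurve.Affine

/-- The elliptic curve `y² = x³ + x² + 16x + 180` over `ℚ`. -/
def W3 : WeierstrassCurve.Affine ℚ := ⟨0, 1, 0, 16, 180⟩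

private lemma W3.some_eq {x₁ y₁ x₂ y₂ : ℚ} (h₁ : W3.Nonsingular x₁ y₁) (h₂ : W3.Nonsingular x₂ y₂)
    (hx : x₁ = x₂) (hy : y₁ = y₂) : Point.some _ _ h₁ = Point.some _ _ h₂ := by
  subst hx; subst hy; rfl

/-- On `y² = x³ + x² + 16x + 180` over `ℚ`: the points `(-2,12)`, `(4,-18)`, `(22,-108)` lie
on the curve; `[2](-2,12) = (4,-18) = [2](22,-108)`, `[2](4,-18) = (-5,0)`; `(-2,12)` has
order 8; and the subgroup generated by the three points is cyclic of order 8. -/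
theorem quasi_critical_points_of_4T5 :
    W3.Δ ≠ 0 ∧
    ∃ (h1 : W3.Nonsingular (-2) 12) (h2 : W3.Nonsingular 4 (-18))
      (h3 : W3.Nonsingular 22 (-108)) (h4 : W3.Nonsingular (-5) 0),
      2 • Point.some _ _ h1 = Point.some _ _ h2 ∧
      2 • Point.some _ _ h3 = Point.some _ _ h2 ∧
      2 • Point.some _ _ h2 = Point.some _ _ h4 ∧
      addOrderOf (Point.some _ _ h1) = 8 ∧
      Nonempty ((AddSubgroup.closure {Point.some _ _ h1, Point.some _ _ h2, Point.some _ _ h3} :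
        AddSubgroup W3.Point) ≃+ ZMod 8) := by
  have hΔ : W3.Δ ≠ 0 := by
    simp only [W3, WeierstrassCurve.Δ, WeierstrassCurve.b₂, WeierstrassCurve.b₄,
      WeierstrassCurve.b₆, WeierstrassCurve.b₈]
    norm_num
  have h1 : W3.Nonsingular (-2) 12 := by
    simp [W3, nonsingular_iff, equation_iff]; norm_num
  have h2 : W3.Nonsingular 4 (-18) := by
    simp [W3, nonsingular_iff, equation_iff]; norm_num
  have h3 : W3.Nonsingular 22 (-108) := by
    simp [W3, nonsingular_iff, equation_iff]; norm_num
  have h4 : W3.Nonsingular (-5) 0 := by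
    simp [W3, nonsingular_iff, equation_iff]; norm_num
  have e1 : 2 • Point.some _ _ h1 = Point.some _ _ h2 := by
    rw [two_nsmul, Point.add_self_of_Y_ne (by norm_num [negY, W3])]
    apply W3.some_eq
    · norm_num [addX, Affine.slope, negY, W3]
    · norm_num [addY, negAddY, addX, Affine.slope, negY, W3]
  have e3 : 2 • Point.some _ _ h3 = Point.some _ _ h2 := by
    rw [two_nsmul, Point.add_self_of_Y_ne (by norm_num [negY, W3])]
    apply W3.some_eq
    · norm_num [addX, Affine.slope, negY, W3]
    · norm_num [addY, negAddY, addX, Affine.slope, negY, W3]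
  have e2 : 2 • Point.some _ _ h2 = Point.some _ _ h4 := by
    rw [two_nsmul, Point.add_self_of_Y_ne (by norm_num [negY, W3])]
    apply W3.some_eq
    · norm_num [addX, Affine.slope, negY, W3]
    · norm_num [addY, negAddY, addX, Affine.slope, negY, W3]
  have e4 : 2 • Point.some _ _ h4 = 0 := by
    rw [two_nsmul, Point.add_self_of_Y_eq (by norm_num [negY, W3])]
  have h4smul : 4 • Point.some _ _ h1 = Point.some _ _ h4 := by
    rw [show (4 : ℕ) = 2 * 2 from rfl, mul_smul, e1, e2]
  have h8smul : 8 • Point.some _ _ h1 = 0 := by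
    rw [show (8 : ℕ) = 2 * 4 from rfl, mul_smul, h4smul, e4]
  have hord : addOrderOf (Point.some _ _ h1) = 8 := by
    have := addOrderOf_eq_prime_pow (x := Point.some _ _ h1) (p := 2) (n := 2)
      (by rw [show (2:ℕ)^2 = 4 from rfl, h4smul]; exact Point.some_ne_zero h4)
      (by rw [show (2:ℕ)^(2+1) = 8 from rfl]; exact h8smul)
    simpa using this
  refine ⟨hΔ, h1, h2, h3, h4, e1, e3, e2, hord, ?_⟩
  -- P3 = -(P1 + P2)
  have hsum : Point.some _ _ h3 + (Point.some _ _ h1 + Point.some _ _ h2) = 0 := by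
    rw [Point.add_of_X_ne (show (-2:ℚ) ≠ 4 by norm_num)]
    exact Point.add_of_Y_eq (by norm_num [addX, Affine.slope, negY, W3])
      (by norm_num [negY, addX, addY, negAddY, Affine.slope, W3])
  have hP3 : Point.some _ _ h3 = (-3 : ℤ) • Point.some _ _ h1 := by
    have h := eq_neg_of_add_eq_zero_left hsum
    rw [← e1] at h
    rw [h]; abel
  have hcl : (AddSubgroup.closure {Point.some _ _ h1, Point.some _ _ h2, Point.some _ _ h3} :
      AddSubgroup W3.Point) = AddSubgroup.zmultiples (Point.some _ _ h1) := by
    apply le_antisymm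
    · rw [AddSubgroup.closure_le]
      intro x hx
      simp only [Set.mem_insert_iff, Set.mem_singleton_iff] at hx
      rcases hx with rfl | rfl | rfl
      · exact AddSubgroup.mem_zmultiples _
      · exact AddSubgroup.mem_zmultiples_iff.mpr ⟨2, by
          rw [show ((2:ℤ)) = ((2:ℕ) : ℤ) from rfl, natCast_zsmul]; exact e1⟩
      · exact AddSubgroup.mem_zmultiples_iff.mpr ⟨-3, hP3.symm⟩
    · intro x hx
      obtain ⟨n, rfl⟩ := AddSubgroup.mem_zmultiples_iff.mp hx
      exact AddSubgroup.zsmul_mem _ (AddSubgroup.subset_closure (by simp)) n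
  rw [hcl]
  haveI hcyc : IsAddCyclic ↥(AddSubgroup.zmultiples (Point.some _ _ h1)) := by
    constructor
    refine ⟨⟨Point.some _ _ h1, AddSubgroup.mem_zmultiples _⟩, ?_⟩
    rintro ⟨x, hx⟩
    obtain ⟨n, rfl⟩ := AddSubgroup.mem_zmultiples_iff.mp hx
    exact AddSubgroup.mem_zmultiples_iff.mpr ⟨n, Subtype.ext (by simp)⟩
  have hcard : Nat.card ↥(AddSubgroup.zmultiples (Point.some _ _ h1)) = 8 := by
    rw [Nat.card_zmultiples, hord]
  exact ⟨(hcard ▸ zmodAddCyclicAddEquiv hcyc).symm⟩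
end

section
/- Let E be the elliptic curve y² + xy = x³ − 28x + 272 over ℚ. The points (2,−16) and (−4,20) lie on E, [2](2,−16) = (−4,20), and the point (2,−16) has order 10 in E(ℚ). -/
open WeierstrassCurve WeierstrassCurve.Affine

/-- The elliptic curve `y² + xy = x³ - 28x + 272` over `ℚ`. -/
def W4 : WeierstrassCurve.Affine ℚ := ⟨1, 0, 0, -28, 272⟩

private lemma some_congr' {F : Type*} [Field F] {W : WeierstrassCurve.Affine F}
    {x₁ y₁ x₂ y₂ : F} (hx : x₁ = x₂) (hy : y₁ = y₂)
    {h₁ : W.Nonsingular x₁ y₁} {h₂ : W.Nonsingular x₂ y₂} :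
    Point.some _ _ h₁ = Point.some _ _ h₂ := by subst hx; subst hy; rfl

/-- On `y² + xy = x³ - 28x + 272` over `ℚ`: the points `(2,-16)` and `(-4,20)` lie on the
curve, `[2](2,-16) = (-4,20)`, and `(2,-16)` has order 10. -/
theorem quasi_critical_points_of_5T4 :
    W4.Δ ≠ 0 ∧
    ∃ (h1 : W4.Nonsingular 2 (-16)) (h2 : W4.Nonsingular (-4) 20),
      2 • Point.some _ _ h1 = Point.some _ _ h2 ∧
      addOrderOf (Point.some _ _ h1) = 10 := by
  have h1 : W4.Nonsingular 2 (-16) := by rw [nonsingular_iff, equation_iff]; norm_num [W4]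
  have h2 : W4.Nonsingular (-4) 20 := by rw [nonsingular_iff, equation_iff]; norm_num [W4]
  have h3 : W4.Nonsingular 32 164 := by rw [nonsingular_iff, equation_iff]; norm_num [W4]
  have h4 : W4.Nonsingular 8 (-28) := by rw [nonsingular_iff, equation_iff]; norm_num [W4]
  have h5 : W4.Nonsingular (-8) 4 := by rw [nonsingular_iff, equation_iff]; norm_num [W4]
  have h6 : W4.Nonsingular 8 20 := by rw [nonsingular_iff, equation_iff]; norm_num [W4]
  have h7 : W4.Nonsingular 32 (-196) := by rw [nonsingular_iff, equation_iff]; norm_num [W4]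
  have h8 : W4.Nonsingular (-4) (-16) := by rw [nonsingular_iff, equation_iff]; norm_num [W4]
  have h9 : W4.Nonsingular 2 14 := by rw [nonsingular_iff, equation_iff]; norm_num [W4]
  have hΔ : W4.Δ ≠ 0 := by norm_num [W4, WeierstrassCurve.Δ, b₂, b₄, b₆, b₈]
  -- the addition chain
  have s2 : Point.some _ _ h1 + Point.some _ _ h1 = Point.some _ _ h2 := by
    rw [Point.add_self_of_Y_ne (by norm_num [W4])]
    exact some_congr' (by rw [slope_of_Y_ne rfl (by norm_num [W4])]; norm_num [W4])
      (by rw [slope_of_Y_ne rfl (by norm_num [W4])]; norm_num [W4, addY, negAddY, negY, addX])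
  have s3 : Point.some _ _ h2 + Point.some _ _ h1 = Point.some _ _ h3 := by
    rw [Point.add_of_X_ne (by norm_num)]
    exact some_congr' (by rw [slope_of_X_ne (by norm_num)]; norm_num [W4])
      (by rw [slope_of_X_ne (by norm_num)]; norm_num [W4, addY, negAddY, negY, addX])
  have s4 : Point.some _ _ h3 + Point.some _ _ h1 = Point.some _ _ h4 := by
    rw [Point.add_of_X_ne (by norm_num)]
    exact some_congr' (by rw [slope_of_X_ne (by norm_num)]; norm_num [W4])
      (by rw [slope_of_X_ne (by norm_num)]; norm_num [W4, addY, negAddY, negY, addX])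
  have s5 : Point.some _ _ h4 + Point.some _ _ h1 = Point.some _ _ h5 := by
    rw [Point.add_of_X_ne (by norm_num)]
    exact some_congr' (by rw [slope_of_X_ne (by norm_num)]; norm_num [W4])
      (by rw [slope_of_X_ne (by norm_num)]; norm_num [W4, addY, negAddY, negY, addX])
  have s6 : Point.some _ _ h5 + Point.some _ _ h1 = Point.some _ _ h6 := by
    rw [Point.add_of_X_ne (by norm_num)]
    exact some_congr' (by rw [slope_of_X_ne (by norm_num)]; norm_num [W4])
      (by rw [slope_of_X_ne (by norm_num)]; norm_num [W4, addY, negAddY, negY, addX])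
  have s7 : Point.some _ _ h6 + Point.some _ _ h1 = Point.some _ _ h7 := by
    rw [Point.add_of_X_ne (by norm_num)]
    exact some_congr' (by rw [slope_of_X_ne (by norm_num)]; norm_num [W4])
      (by rw [slope_of_X_ne (by norm_num)]; norm_num [W4, addY, negAddY, negY, addX])
  have s8 : Point.some _ _ h7 + Point.some _ _ h1 = Point.some _ _ h8 := by
    rw [Point.add_of_X_ne (by norm_num)]
    exact some_congr' (by rw [slope_of_X_ne (by norm_num)]; norm_num [W4])
      (by rw [slope_of_X_ne (by norm_num)]; norm_num [W4, addY, negAddY, negY, addX])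
  have s9 : Point.some _ _ h8 + Point.some _ _ h1 = Point.some _ _ h9 := by
    rw [Point.add_of_X_ne (by norm_num)]
    exact some_congr' (by rw [slope_of_X_ne (by norm_num)]; norm_num [W4])
      (by rw [slope_of_X_ne (by norm_num)]; norm_num [W4, addY, negAddY, negY, addX])
  have s10 : Point.some _ _ h9 + Point.some _ _ h1 = 0 :=
    Point.add_of_Y_eq rfl (by norm_num [W4])
  -- multiples of P
  have m2 : 2 • Point.some _ _ h1 = Point.some _ _ h2 := by rw [two_smul]; exact s2
  have m3 : 3 • Point.some _ _ h1 = Point.some _ _ h3 := by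
    rw [succ_nsmul, m2]; exact s3
  have m4 : 4 • Point.some _ _ h1 = Point.some _ _ h4 := by
    rw [succ_nsmul, m3]; exact s4
  have m5 : 5 • Point.some _ _ h1 = Point.some _ _ h5 := by
    rw [succ_nsmul, m4]; exact s5
  have m6 : 6 • Point.some _ _ h1 = Point.some _ _ h6 := by
    rw [succ_nsmul, m5]; exact s6
  have m7 : 7 • Point.some _ _ h1 = Point.some _ _ h7 := by
    rw [succ_nsmul, m6]; exact s7
  have m8 : 8 • Point.some _ _ h1 = Point.some _ _ h8 := by
    rw [succ_nsmul, m7]; exact s8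
  have m9 : 9 • Point.some _ _ h1 = Point.some _ _ h9 := by
    rw [succ_nsmul, m8]; exact s9
  have m10 : 10 • Point.some _ _ h1 = 0 := by
    rw [succ_nsmul, m9]; exact s10
  refine ⟨hΔ, h1, h2, m2, ?_⟩
  rw [addOrderOf_eq_iff (by norm_num)]
  refine ⟨m10, ?_⟩
  intro m hm hm'
  interval_cases m
  · rw [one_nsmul]; exact Point.some_ne_zero h1
  · rw [m2]; exact Point.some_ne_zero h2
  · rw [m3]; exact Point.some_ne_zero h3
  · rw [m4]; exact Point.some_ne_zero h4
  · rw [m5]; exact Point.some_ne_zero h5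
  · rw [m6]; exact Point.some_ne_zero h6
  · rw [m7]; exact Point.some_ne_zero h7
  · rw [m8]; exact Point.some_ne_zero h8
  · rw [m9]; exact Point.some_ne_zero h9
end

section
/- Let E be the elliptic curve y² = x³ + 6x − 7 over ℚ. The points (4,9) and (1,0) lie on E, [2](4,9) = (1,0), the point (1,0) has order 2, and the point (4,9) has order 4 in E(ℚ). -/
open WeierstrassCurve WeierstrassCurve.Affine

/-- The elliptic curve `y² = x³ + 6x - 7` over `ℚ`. -/
def W5 : WeierstrassCurve.Affine ℚ := ⟨0, 0, 0, 6, -7⟩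

lemma some_eq_some' {W : WeierstrassCurve.Affine ℚ} {x₁ y₁ x₂ y₂ : ℚ}
    (h₁ : W.Nonsingular x₁ y₁) (h₂ : W.Nonsingular x₂ y₂) (hx : x₁ = x₂) (hy : y₁ = y₂) :
    Point.some _ _ h₁ = Point.some _ _ h₂ := by subst hx; subst hy; rfl

/-- On `y² = x³ + 6x - 7` over `ℚ`: the points `(4,9)` and `(1,0)` lie on the curve,
`[2](4,9) = (1,0)`, `(1,0)` has order 2, and `(4,9)` has order 4. -/
theorem quasi_critical_points_of_6T6 :
    W5.Δ ≠ 0 ∧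
    ∃ (h1 : W5.Nonsingular 4 9) (h2 : W5.Nonsingular 1 0),
      2 • Point.some _ _ h1 = Point.some _ _ h2 ∧
      addOrderOf (Point.some _ _ h2) = 2 ∧
      addOrderOf (Point.some _ _ h1) = 4 := by
  have h1 : W5.Nonsingular 4 9 := by
    simp [W5, WeierstrassCurve.Affine.Nonsingular, WeierstrassCurve.Affine.Equation,
      WeierstrassCurve.Affine.polynomial, WeierstrassCurve.Affine.polynomialX,
      WeierstrassCurve.Affine.polynomialY, Polynomial.evalEval]; norm_num
  have h2 : W5.Nonsingular 1 0 := by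
    simp [W5, WeierstrassCurve.Affine.Nonsingular, WeierstrassCurve.Affine.Equation,
      WeierstrassCurve.Affine.polynomial, WeierstrassCurve.Affine.polynomialX,
      WeierstrassCurve.Affine.polynomialY, Polynomial.evalEval]; norm_num
  have hy : (9 : ℚ) ≠ W5.negY 4 9 := by norm_num [W5, negY]
  have hdouble : 2 • Point.some _ _ h1 = Point.some _ _ h2 := by
    rw [two_nsmul, Point.add_self_of_Y_ne hy]
    apply some_eq_some'
    · norm_num [W5, addX, slope_of_Y_ne rfl hy, negY]
    · norm_num [W5, addY, negAddY, addX, slope_of_Y_ne rfl hy, negY]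
  have h2zero : 2 • Point.some _ _ h2 = 0 := by
    rw [two_nsmul]
    exact Point.add_self_of_Y_eq (by norm_num [W5, negY])
  have hne2 : Point.some _ _ h2 ≠ 0 := by
    intro h; cases h
  have hord2 : addOrderOf (Point.some _ _ h2) = 2 := by
    apply addOrderOf_eq_prime h2zero hne2
  refine ⟨?_, h1, h2, hdouble, hord2, ?_⟩
  · norm_num [W5, WeierstrassCurve.Δ, WeierstrassCurve.b₂, WeierstrassCurve.b₄,
      WeierstrassCurve.b₆, WeierstrassCurve.b₈]
  · have h4 : 4 • Point.some _ _ h1 = 0 := by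
      have : (4 : ℕ) • Point.some _ _ h1 = 2 • (2 • Point.some _ _ h1) := by
        rw [← mul_nsmul']
      rw [this, hdouble, h2zero]
    have hdvd : addOrderOf (Point.some _ _ h1) ∣ 4 := addOrderOf_dvd_of_nsmul_eq_zero h4
    have hne1 : Point.some _ _ h1 ≠ 0 := fun h => by cases h
    have hns2 : 2 • Point.some _ _ h1 ≠ 0 := by rw [hdouble]; exact hne2
    have hle : addOrderOf (Point.some _ _ h1) ≤ 4 := Nat.le_of_dvd (by norm_num) hdvd
    interval_cases h : addOrderOf (Point.some _ _ h1)
    · exact absurd hdvd (by norm_num)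
    · exact absurd (AddMonoid.addOrderOf_eq_one_iff.mp h) hne1
    · exact absurd (h ▸ addOrderOf_nsmul_eq_zero (Point.some _ _ h1)) hns2
    · exact absurd hdvd (by norm_num)
    · rfl
end

section
/- For all x, y ∈ ℚ with y² = x³ − 15x + 22 and x ≠ 2, setting u = (x² − 2x − 3)/(4(x − 2)) and v = (x² − 4x + 7)·y/(8(x − 2)²), one has v² = u³ + 1. In other words, the map ψ(x,y) = ((x²−2x−3)/(4(x−2)), (x²−4x+7)y/(8(x−2)²)) sends affine points of the elliptic curve y² = x³ − 15x + 22 (with x ≠ 2) to affine points of the elliptic curve y² = x³ + 1. -/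
/-- The map `ψ(x,y) = ((x² - 2x - 3)/(4(x - 2)), (x² - 4x + 7)y/(8(x - 2)²))` sends affine
points of the elliptic curve `y² = x³ - 15x + 22` (with `x ≠ 2`) to affine points of the
elliptic curve `y² = x³ + 1`. -/
theorem isogeny_formula_maps_curve_to_curve :
    ∀ x y : ℚ, y ^ 2 = x ^ 3 - 15 * x + 22 → x ≠ 2 →
      ((x ^ 2 - 4 * x + 7) * y / (8 * (x - 2) ^ 2)) ^ 2 =
        ((x ^ 2 - 2 * x - 3) / (4 * (x - 2))) ^ 3 + 1 := by
  intro x y h hx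
  have h2 : x - 2 ≠ 0 := sub_ne_zero.mpr hx
  field_simp
  linear_combination (64*(x^2-4*x+7)^2) * h
end

section
/- Let E be the elliptic curve y² = x³ + 1 over ℂ, and let ω ∈ ℂ be a primitive cube root of unity (ω² + ω + 1 = 0). Then the points (2,−3) and (2ω,−3) lie on E(ℂ), each satisfies [2]P = (0,−1), and the subgroup of E(ℂ) generated by {(0,1), (2,−3), (2ω,−3)} is isomorphic to ℤ/2ℤ × ℤ/6ℤ. -/
open WeierstrassCurve WeierstrassCurve.Affine

/-- The elliptic curve `y² = x³ + 1` over `ℂ`. -/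
def W14 : WeierstrassCurve.Affine ℂ := ⟨0, 0, 0, 0, 1⟩

lemma W14_Δ : W14.Δ ≠ 0 := by
  simp only [W14, Δ, b₂, b₄, b₆, b₈]; norm_num

lemma W14_ns (x y : ℂ) (h : y ^ 2 = x ^ 3 + 1) : W14.Nonsingular x y := by
  apply (equation_iff_nonsingular_of_Δ_ne_zero W14_Δ).mp
  rw [equation_iff]; simp [W14]; linear_combination h

lemma W14_some_eq {x1 y1 x2 y2 : ℂ} {h1 : W14.Nonsingular x1 y1} {h2 : W14.Nonsingular x2 y2}
    (hx : x1 = x2) (hy : y1 = y2) : Point.some _ _ h1 = Point.some _ _ h2 := by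
  subst hx; subst hy; rfl

def hP1 : W14.Nonsingular 0 1 := W14_ns _ _ (by norm_num)
def hP2 : W14.Nonsingular 2 (-3) := W14_ns _ _ (by norm_num)
def hP2' : W14.Nonsingular 2 3 := W14_ns _ _ (by norm_num)
def hN : W14.Nonsingular 0 (-1) := W14_ns _ _ (by norm_num)
def hM : W14.Nonsingular (-1) 0 := W14_ns _ _ (by norm_num)

lemma W14_negY (x y : ℂ) : W14.negY x y = -y := by simp [negY, W14]

section Omega
variable {ω : ℂ}

def hP3 (hω : ω ^ 2 + ω + 1 = 0) : W14.Nonsingular (2 * ω) (-3) :=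
  W14_ns _ _ (by linear_combination (8 - 8 * ω) * hω)

def hT (hω : ω ^ 2 + ω + 1 = 0) : W14.Nonsingular (1 + ω) 0 :=
  W14_ns _ _ (by linear_combination (-ω - 2) * hω)

lemma hω1 (hω : ω ^ 2 + ω + 1 = 0) : ω ≠ 1 := by rintro rfl; norm_num at hω

end Omega

lemma L1 : Point.some _ _ hP2 + Point.some _ _ hP2 = Point.some _ _ hN := by
  rw [Point.add_self_of_Y_ne (by rw [W14_negY]; norm_num)]
  refine W14_some_eq ?_ ?_ <;>
  · rw [slope_of_Y_ne rfl (by rw [W14_negY]; norm_num)]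
    simp only [addX, addY, negAddY, negY, W14]; norm_num

lemma L3 : Point.some _ _ hN + Point.some _ _ hN = Point.some _ _ hP1 := by
  rw [Point.add_self_of_Y_ne (by rw [W14_negY]; norm_num)]
  refine W14_some_eq ?_ ?_ <;>
  · rw [slope_of_Y_ne rfl (by rw [W14_negY]; norm_num)]
    simp only [addX, addY, negAddY, negY, W14]; norm_num

lemma L4 : Point.some _ _ hN + Point.some _ _ hP2 = Point.some _ _ hM := by
  rw [Point.add_of_X_ne (by norm_num)]
  refine W14_some_eq ?_ ?_ <;>
  · rw [slope_of_X_ne (by norm_num)]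
    simp only [addX, addY, negAddY, negY, W14]; norm_num

lemma L5 : Point.some _ _ hM + Point.some _ _ hM = 0 :=
  Point.add_self_of_Y_eq (by rw [W14_negY]; ring)

lemma L6 : -Point.some _ _ hP2 = Point.some _ _ hP2' := by
  rw [Point.neg_some]; exact W14_some_eq rfl (by rw [W14_negY]; norm_num)

lemma L7 : -Point.some _ _ hN = Point.some _ _ hP1 := by
  rw [Point.neg_some]; exact W14_some_eq rfl (by rw [W14_negY]; norm_num)

lemma L8 : -Point.some _ _ hM = Point.some _ _ hM := by
  rw [Point.neg_some]; exact W14_some_eq rfl (by rw [W14_negY, neg_zero])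

lemma L9 : -Point.some _ _ hP1 = Point.some _ _ hN := by
  rw [Point.neg_some]; exact W14_some_eq rfl (by rw [W14_negY])

section Omega2
variable {ω : ℂ} (hω : ω ^ 2 + ω + 1 = 0)

lemma L2 : Point.some _ _ (hP3 hω) + Point.some _ _ (hP3 hω) = Point.some _ _ hN := by
  have hy : (-3 : ℂ) ≠ W14.negY (2 * ω) (-3) := by rw [W14_negY]; norm_num
  have hs : W14.slope (2 * ω) (2 * ω) (-3) (-3) = 2 + 2 * ω := by
    rw [slope_of_Y_ne rfl hy, W14_negY, div_eq_iff (by norm_num)]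
    simp only [W14]
    linear_combination 12 * hω
  rw [Point.add_self_of_Y_ne hy]
  refine W14_some_eq ?_ ?_ <;> rw [hs] <;>
      simp only [addX, addY, negAddY, negY, W14]
  · linear_combination 4 * hω
  · linear_combination (-8 * ω - 4) * hω

lemma L10 : Point.some _ _ (hP3 hω) + Point.some _ _ hP2' = Point.some _ _ (hT hω) := by
  have hx : (2 : ℂ) * ω ≠ 2 := fun h => hω1 hω (by linear_combination h / 2)
  have hs : W14.slope (2 * ω) 2 (-3) 3 = ω + 2 := by
    rw [slope_of_X_ne hx, div_eq_iff (sub_ne_zero.mpr hx)]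
    linear_combination -2 * hω
  rw [Point.add_of_X_ne hx]
  refine W14_some_eq ?_ ?_ <;> rw [hs] <;>
      simp only [addX, addY, negAddY, negY, W14]
  · linear_combination hω
  · linear_combination (-ω - 1) * hω

lemma L11 : Point.some _ _ (hT hω) + Point.some _ _ (hT hω) = 0 :=
  Point.add_self_of_Y_eq (by rw [W14_negY]; ring)

end Omega2

lemma L6' : -Point.some _ _ hP2' = Point.some _ _ hP2 := by
  rw [Point.neg_some]; exact W14_some_eq rfl (by rw [W14_negY])

/-- On `y² = x³ + 1` over `ℂ`, with `ω` a primitive cube root of unity (`ω² + ω + 1 = 0`):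
the points `(2,-3)` and `(2ω,-3)` lie on the curve, each satisfies `[2]P = (0,-1)`, and the
subgroup generated by `{(0,1), (2,-3), (2ω,-3)}` is isomorphic to `ℤ/2ℤ × ℤ/6ℤ`. -/
theorem quasi_critical_points_of_6T5_complex (ω : ℂ) (hω : ω ^ 2 + ω + 1 = 0) :
    W14.Δ ≠ 0 ∧
    ∃ (h1 : W14.Nonsingular 0 1) (h2 : W14.Nonsingular 2 (-3))
      (h3 : W14.Nonsingular (2 * ω) (-3)) (h4 : W14.Nonsingular 0 (-1)),
      2 • Point.some _ _ h2 = Point.some _ _ h4 ∧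
      2 • Point.some _ _ h3 = Point.some _ _ h4 ∧
      Nonempty ((AddSubgroup.closure {Point.some _ _ h1, Point.some _ _ h2, Point.some _ _ h3} :
        AddSubgroup W14.Point) ≃+ ZMod 2 × ZMod 6) := by
  refine ⟨W14_Δ, hP1, hP2, hP3 hω, hN, by rw [two_nsmul]; exact L1,
    by rw [two_nsmul]; exact L2 hω, ?_⟩
  set P1 : W14.Point := Point.some _ _ hP1 with hP1def
  set P2 : W14.Point := Point.some _ _ hP2 with hP2def
  set P3 : W14.Point := Point.some _ _ (hP3 hω) with hP3def
  set T : W14.Point := Point.some _ _ (hT hω) with hTdef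
  -- multiples of P2
  have e2 : 2 • P2 = Point.some _ _ hN := by rw [two_nsmul]; exact L1
  have e3 : 3 • P2 = Point.some _ _ hM := by
    rw [show (3 : ℕ) = 2 + 1 from rfl, add_nsmul, e2, one_nsmul]; exact L4
  have e4 : 4 • P2 = P1 := by
    rw [show (4 : ℕ) = 2 + 2 from rfl, add_nsmul, e2]; exact L3
  have e6 : 6 • P2 = 0 := by
    rw [show (6 : ℕ) = 3 + 3 from rfl, add_nsmul, e3]; exact L5
  have e5 : 5 • P2 = Point.some _ _ hP2' := by
    have h : 5 • P2 + P2 = 0 := by rw [← succ_nsmul]; exact e6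
    have h2 := eq_neg_of_add_eq_zero_left h
    rw [L6] at h2; exact h2
  have hTP2 : T = P3 - P2 := by rw [sub_eq_add_neg, L6]; exact (L10 hω).symm
  have hTP2' : T + P2 = P3 := by rw [hTP2, sub_add_cancel]
  have h2T : (2 : ℤ) • T = 0 := by rw [two_zsmul]; exact L11 hω
  have h6P : (6 : ℤ) • P2 = 0 := by
    rw [show (6 : ℤ) = ((6 : ℕ) : ℤ) by norm_num, natCast_zsmul]; exact e6
  let f : ZMod 2 →+ W14.Point := ZMod.lift 2 ⟨zmultiplesHom _ T, by simpa using h2T⟩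
  let g : ZMod 6 →+ W14.Point := ZMod.lift 6 ⟨zmultiplesHom _ P2, by simpa using h6P⟩
  let φ : ZMod 2 × ZMod 6 →+ W14.Point := f.coprod g
  have fv0 : f 0 = 0 := map_zero f
  have fv1 : f 1 = T := by
    have : f ((1 : ℤ) : ZMod 2) = (1 : ℤ) • T := ZMod.lift_coe 2 _ 1
    simpa using this
  have gv : ∀ k : ℕ, g ((k : ℤ) : ZMod 6) = k • P2 := by
    intro k
    have : g ((k : ℤ) : ZMod 6) = (k : ℤ) • P2 := ZMod.lift_coe 6 _ k
    simpa [natCast_zsmul] using this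
  have gv0 : g 0 = 0 := map_zero g
  have gv1 : g 1 = P2 := by simpa using gv 1
  have gv2 : g 2 = 2 • P2 := by simpa using gv 2
  have gv3 : g 3 = 3 • P2 := by simpa using gv 3
  have gv4 : g 4 = 4 • P2 := by simpa using gv 4
  have gv5 : g 5 = 5 • P2 := by simpa using gv 5
  -- x-coordinate facts
  have hx0 : (1 : ℂ) + ω ≠ 0 := fun h => one_ne_zero (by linear_combination hω - ω * h)
  have hxm1 : (1 : ℂ) + ω ≠ -1 := fun h => by
    have : (3 : ℂ) = 0 := by linear_combination hω + (1 - ω) * h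
    norm_num at this
  have hx2 : (1 : ℂ) + ω ≠ 2 := fun h => hω1 hω (by linear_combination h)
  -- injectivity
  have hinj : Function.Injective φ := by
    rw [injective_iff_map_eq_zero]
    rintro ⟨a, b⟩ hab
    rw [show φ (a, b) = f a + g b from rfl] at hab
    rw [Prod.mk_eq_zero]
    have ha : a = 0 ∨ a = 1 := (by decide : ∀ x : ZMod 2, x = 0 ∨ x = 1) a
    have hb : b = 0 ∨ b = 1 ∨ b = 2 ∨ b = 3 ∨ b = 4 ∨ b = 5 :=
      (by decide : ∀ x : ZMod 6, x = 0 ∨ x = 1 ∨ x = 2 ∨ x = 3 ∨ x = 4 ∨ x = 5) b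
    rcases ha with rfl | rfl
    · rcases hb with rfl | rfl | rfl | rfl | rfl | rfl
      · exact ⟨rfl, rfl⟩
      · rw [fv0, gv1, zero_add] at hab; exact absurd hab (Point.some_ne_zero _)
      · rw [fv0, gv2, zero_add, e2] at hab; exact absurd hab (Point.some_ne_zero _)
      · rw [fv0, gv3, zero_add, e3] at hab; exact absurd hab (Point.some_ne_zero _)
      · rw [fv0, gv4, zero_add, e4] at hab; exact absurd hab (Point.some_ne_zero _)
      · rw [fv0, gv5, zero_add, e5] at hab; exact absurd hab (Point.some_ne_zero _)
    · rcases hb with rfl | rfl | rfl | rfl | rfl | rfl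
      · rw [fv1, gv0, add_zero] at hab; exact absurd hab (Point.some_ne_zero _)
      · rw [fv1, gv1, hTP2'] at hab; exact absurd hab (Point.some_ne_zero _)
      · rw [fv1, gv2, e2] at hab
        have h := eq_neg_of_add_eq_zero_left hab
        rw [L7] at h
        exact absurd ((Point.some.inj h).1) hx0
      · rw [fv1, gv3, e3] at hab
        have h := eq_neg_of_add_eq_zero_left hab
        rw [L8] at h
        exact absurd ((Point.some.inj h).1) hxm1
      · rw [fv1, gv4, e4, hP1def] at hab
        have h := eq_neg_of_add_eq_zero_left hab
        rw [L9] at h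
        exact absurd ((Point.some.inj h).1) hx0
      · rw [fv1, gv5, e5] at hab
        have h := eq_neg_of_add_eq_zero_left hab
        rw [L6'] at h
        exact absurd ((Point.some.inj h).1) hx2
  -- range
  have hmem1 : P1 ∈ ({P1, P2, P3} : Set W14.Point) := by simp
  have hmem2 : P2 ∈ ({P1, P2, P3} : Set W14.Point) := by simp
  have hmem3 : P3 ∈ ({P1, P2, P3} : Set W14.Point) := by simp
  have hcl : AddSubgroup.closure ({P1, P2, P3} : Set W14.Point) = φ.range := by
    apply le_antisymm
    · rw [AddSubgroup.closure_le]
      rintro x hx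
      simp only [Set.mem_insert_iff, Set.mem_singleton_iff] at hx
      rcases hx with rfl | rfl | rfl
      · exact ⟨(0, 4), by rw [show φ (0, 4) = f 0 + g 4 from rfl, fv0, gv4, zero_add, e4]⟩
      · exact ⟨(0, 1), by rw [show φ (0, 1) = f 0 + g 1 from rfl, fv0, gv1, zero_add]⟩
      · exact ⟨(1, 1), by rw [show φ (1, 1) = f 1 + g 1 from rfl, fv1, gv1, hTP2']⟩
    · rintro x ⟨⟨a, b⟩, rfl⟩
      rw [show φ (a, b) = f a + g b from rfl]
      refine add_mem ?_ ?_
      · rcases (by decide : ∀ x : ZMod 2, x = 0 ∨ x = 1) a with rfl | rfl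
        · rw [fv0]; exact zero_mem _
        · rw [fv1, hTP2]
          exact sub_mem (AddSubgroup.subset_closure hmem3) (AddSubgroup.subset_closure hmem2)
      · rcases (by decide : ∀ x : ZMod 6,
            x = 0 ∨ x = 1 ∨ x = 2 ∨ x = 3 ∨ x = 4 ∨ x = 5) b with rfl | rfl | rfl | rfl | rfl | rfl
        · rw [gv0]; exact zero_mem _
        · rw [gv1]; exact AddSubgroup.subset_closure hmem2
        · rw [gv2]; exact nsmul_mem (AddSubgroup.subset_closure hmem2) 2
        · rw [gv3]; exact nsmul_mem (AddSubgroup.subset_closure hmem2) 3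
        · rw [gv4]; exact nsmul_mem (AddSubgroup.subset_closure hmem2) 4
        · rw [gv5]; exact nsmul_mem (AddSubgroup.subset_closure hmem2) 5
  exact ⟨(AddEquiv.addSubgroupCongr hcl).trans (AddMonoidHom.ofInjective hinj).symm⟩
end
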